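/- For μ-almost every Q ∈ O(m), writing ζ_a := Q·w_a for each a: (i) every coordinate of every ζ_a is nonzero, i.e. (ζ_a)_i ≠ 0 for all a ∈ {1,…,K} and i ∈ {1,…,m}; and (ii) for all a ≠ b and every i ∈ {1,…,m−1}: ((ζ_b)_i)² · Σ_{j=i+1}^{m} ((ζ_a)_j)² ≠ ((ζ_a)_i)² · Σ_{j=i+1}^{m} ((ζ_b)_j)². (Lemma 3.2, in the coordinate form established in its proof: a uniformly random rotation puts the normalized reward vectors in generic position.) -/

import Mathlib

open MeasureTheory

/-- Matrices over `ℝ` carry the (Borel) product measurable structure. -/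
instance (m : ℕ) : MeasurableSpace (Matrix (Fin m) (Fin m) ℝ) :=
  inferInstanceAs (MeasurableSpace (Fin m → Fin m → ℝ))

noncomputable section

/-- countability of a joint (cos, sin) level set -/
lemma countable_cos_sin (c s : ℝ) : {t : ℝ | Real.cos t = c ∧ Real.sin t = s}.Countable := by
  rcases Set.eq_empty_or_nonempty {t : ℝ | Real.cos t = c ∧ Real.sin t = s} with h | ⟨θ, hθ⟩
  · simp [h]
  · have hsub : {t : ℝ | Real.cos t = c ∧ Real.sin t = s} ⊆
        Set.range (fun n : ℤ => θ + n * (2 * Real.pi)) := by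
      intro t ht
      have h1 : Complex.exp (t * Complex.I) = Complex.exp (θ * Complex.I) := by
        rw [Complex.exp_mul_I, Complex.exp_mul_I]
        rw [← Complex.ofReal_cos, ← Complex.ofReal_sin, ← Complex.ofReal_cos,
          ← Complex.ofReal_sin, ht.1, ht.2, hθ.1, hθ.2]
      rw [Complex.exp_eq_exp_iff_exists_int] at h1
      obtain ⟨n, hn⟩ := h1
      refine ⟨n, ?_⟩
      have h2 : (t : ℂ) * Complex.I = ((θ : ℝ) + (n : ℝ) * (2 * Real.pi) : ℝ) * Complex.I := by
        push_cast
        linear_combination hn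
      have h3 := mul_right_cancel₀ Complex.I_ne_zero h2
      exact_mod_cast h3.symm
    exact Set.Countable.mono hsub (Set.countable_range _)


/-- countability of the zero set of a nontrivial degree-one trigonometric polynomial -/
lemma countable_affine_trig (a b c : ℝ) (h : ¬ (a = 0 ∧ b = 0 ∧ c = 0)) :
    {t : ℝ | a * Real.cos t + b * Real.sin t + c = 0}.Countable := by
  by_cases hab : a = 0 ∧ b = 0
  · have hc : c ≠ 0 := fun hc => h ⟨hab.1, hab.2, hc⟩
    have : {t : ℝ | a * Real.cos t + b * Real.sin t + c = 0} = ∅ := by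
      ext t; simp [hab.1, hab.2, hc]
    simp [this]
  · have hR : a ^ 2 + b ^ 2 > 0 := by
      rcases not_and_or.1 hab with ha | hb
      · positivity
      · positivity
    have hRne : a ^ 2 + b ^ 2 ≠ 0 := ne_of_gt hR
    have key : {t : ℝ | a * Real.cos t + b * Real.sin t + c = 0} ⊆
        {t : ℝ | Real.cos t = (a * (-c) + b * Real.sqrt (a ^ 2 + b ^ 2 - c ^ 2)) / (a ^ 2 + b ^ 2)
          ∧ Real.sin t = (b * (-c) - a * Real.sqrt (a ^ 2 + b ^ 2 - c ^ 2)) / (a ^ 2 + b ^ 2)} ∪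
        {t : ℝ | Real.cos t =
            (a * (-c) + b * (-Real.sqrt (a ^ 2 + b ^ 2 - c ^ 2))) / (a ^ 2 + b ^ 2)
          ∧ Real.sin t =
            (b * (-c) - a * (-Real.sqrt (a ^ 2 + b ^ 2 - c ^ 2))) / (a ^ 2 + b ^ 2)} := by
      intro t ht
      simp only [Set.mem_setOf_eq] at ht
      have hpyth : Real.cos t ^ 2 + Real.sin t ^ 2 = 1 := Real.cos_sq_add_sin_sq t
      have hl2 : (b * Real.cos t - a * Real.sin t) ^ 2 = a ^ 2 + b ^ 2 - c ^ 2 := by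
        linear_combination (a ^ 2 + b ^ 2) * hpyth +
          (c - (a * Real.cos t + b * Real.sin t)) * ht
      have habs : |b * Real.cos t - a * Real.sin t| = Real.sqrt (a ^ 2 + b ^ 2 - c ^ 2) := by
        rw [← hl2, Real.sqrt_sq_eq_abs]
      have hcases : b * Real.cos t - a * Real.sin t = Real.sqrt (a ^ 2 + b ^ 2 - c ^ 2) ∨
          b * Real.cos t - a * Real.sin t = -Real.sqrt (a ^ 2 + b ^ 2 - c ^ 2) := by
        rcases le_or_gt 0 (b * Real.cos t - a * Real.sin t) with h1 | h1
        · left; rw [← habs, abs_of_nonneg h1]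
        · right; rw [← habs, abs_of_neg h1]; ring
      have hct : Real.cos t * (a ^ 2 + b ^ 2) =
          a * (-c) + b * (b * Real.cos t - a * Real.sin t) := by linear_combination a * ht
      have hst : Real.sin t * (a ^ 2 + b ^ 2) =
          b * (-c) - a * (b * Real.cos t - a * Real.sin t) := by linear_combination b * ht
      rcases hcases with hld | hld
      · left
        constructor
        · rw [eq_div_iff hRne]; linear_combination hct + b * hld
        · rw [eq_div_iff hRne]; linear_combination hst - a * hld
      · right
        constructor
        · rw [eq_div_iff hRne]; linear_combination hct + b * hld
        · rw [eq_div_iff hRne]; linear_combination hst - a * hld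
    exact Set.Countable.mono key ((countable_cos_sin _ _).union (countable_cos_sin _ _))

/-- countability of the zero set of a nontrivial homogeneous quadratic trig polynomial -/
lemma countable_quad_trig (a b d : ℝ) (h : ¬ (a = 0 ∧ b = 0 ∧ d = 0)) :
    {t : ℝ | a * Real.cos t ^ 2 + b * (Real.cos t * Real.sin t) +
      d * Real.sin t ^ 2 = 0}.Countable := by
  have hsub : {t : ℝ | a * Real.cos t ^ 2 + b * (Real.cos t * Real.sin t) +
      d * Real.sin t ^ 2 = 0} ⊆ (fun t : ℝ => 2 * t) ⁻¹'
        {u : ℝ | ((a - d) / 2) * Real.cos u + (b / 2) * Real.sin u + (a + d) / 2 = 0} := by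
    intro t ht
    simp only [Set.mem_setOf_eq, Set.mem_preimage] at ht ⊢
    have h1 : Real.cos (2 * t) = 2 * Real.cos t ^ 2 - 1 := Real.cos_two_mul t
    have h2 : Real.sin (2 * t) = 2 * Real.sin t * Real.cos t := Real.sin_two_mul t
    have hpyth : Real.cos t ^ 2 + Real.sin t ^ 2 = 1 := Real.cos_sq_add_sin_sq t
    rw [h1, h2]
    linear_combination ht - d * hpyth
  have hcnt : {u : ℝ | ((a - d) / 2) * Real.cos u + (b / 2) * Real.sin u +
      (a + d) / 2 = 0}.Countable := by
    apply countable_affine_trig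
    rintro ⟨h1, h2, h3⟩
    apply h
    refine ⟨?_, ?_, ?_⟩ <;> linarith
  exact Set.Countable.mono hsub (hcnt.preimage (mul_right_injective₀ two_ne_zero))
section Rot

variable {m : ℕ}

/-- Givens rotation by angle `t` in the `(i,j)` coordinate plane. -/
def rotM (i j : Fin m) (t : ℝ) : Matrix (Fin m) (Fin m) ℝ :=
  fun p q =>
    if p = i then (if q = i then Real.cos t else if q = j then -Real.sin t else 0)
    else if p = j then (if q = i then Real.sin t else if q = j then Real.cos t else 0)
    else if q = p then 1 else 0

private lemma sum_two_ite (i j : Fin m) (hij : i ≠ j) (f : Fin m → ℝ) (A B : ℝ)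
    (hf : ∀ q, f q = (if q = i then A else 0) + (if q = j then B else 0)) :
    ∑ q, f q = A + B := by
  rw [Finset.sum_congr rfl (fun q _ => hf q), Finset.sum_add_distrib,
    Finset.sum_ite_eq' Finset.univ i, Finset.sum_ite_eq' Finset.univ j]
  simp

lemma rotM_mulVec_apply (i j : Fin m) (hij : i ≠ j) (t : ℝ) (z : Fin m → ℝ) (p : Fin m) :
    (rotM i j t).mulVec z p =
      if p = i then Real.cos t * z i - Real.sin t * z j
      else if p = j then Real.sin t * z i + Real.cos t * z j
      else z p := by
  by_cases hpi : p = i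
  · subst hpi
    simp only [if_pos rfl]
    have : (rotM p j t).mulVec z p
        = ∑ q, ((if q = p then Real.cos t * z p else 0) + (if q = j then -Real.sin t * z j else 0)) := by
      unfold Matrix.mulVec dotProduct rotM
      refine Finset.sum_congr rfl fun q _ => ?_
      by_cases h1 : q = p
      · subst h1; simp [hij]
      · by_cases h2 : q = j
        · subst h2; simp [h1, Ne.symm hij]
        · simp [h1, h2]
    rw [this, Finset.sum_add_distrib, Finset.sum_ite_eq' Finset.univ p,
      Finset.sum_ite_eq' Finset.univ j]
    simp; ring
  · by_cases hpj : p = j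
    · subst hpj
      simp only [if_neg hpi, if_pos rfl]
      have : (rotM i p t).mulVec z p
          = ∑ q, ((if q = i then Real.sin t * z i else 0) + (if q = p then Real.cos t * z p else 0)) := by
        unfold Matrix.mulVec dotProduct rotM
        refine Finset.sum_congr rfl fun q _ => ?_
        by_cases h1 : q = i
        · subst h1; simp [hpi, Ne.symm hij, hij]
        · by_cases h2 : q = p
          · subst h2; simp [h1, hpi]
          · simp [h1, h2, hpi]
      rw [this, Finset.sum_add_distrib, Finset.sum_ite_eq' Finset.univ i,
        Finset.sum_ite_eq' Finset.univ p]
      simp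
    · have hpi' : i ≠ p := fun h => hpi h.symm
      have hpj' : j ≠ p := fun h => hpj h.symm
      simp only [if_neg hpi, if_neg hpj]
      have : (rotM i j t).mulVec z p = ∑ q, (if q = p then z p else 0) := by
        unfold Matrix.mulVec dotProduct rotM
        refine Finset.sum_congr rfl fun q _ => ?_
        by_cases h1 : q = p
        · subst h1; simp [hpi, hpj]
        · by_cases h2 : q = i
          · subst h2; simp [hpi, hpj, h1]
          · by_cases h3 : q = j <;> simp [hpi, hpj, h1, h2, h3, hpi', hpj']
      rw [this, Finset.sum_ite_eq' Finset.univ p]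
      simp

end Rot
section Rot2

variable {m : ℕ}

lemma rotM_star (i j : Fin m) (t : ℝ) :
    star (rotM i j t) = rotM i j (-t) := by
  ext a b
  have h : star (rotM i j t) a b = rotM i j t b a := by
    simp [Matrix.star_eq_conjTranspose, Matrix.conjTranspose_apply]
  rw [h]
  unfold rotM
  split_ifs <;> first | rfl | simp_all [Real.cos_neg, Real.sin_neg]

lemma matrix_eq_one_of_mulVec (M : Matrix (Fin m) (Fin m) ℝ)
    (h : ∀ z : Fin m → ℝ, M.mulVec z = z) : M = 1 := by
  ext p q
  have := congrFun (h (Pi.single q 1)) p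
  rw [Matrix.mulVec_single] at this
  simp at this
  rw [this, Matrix.one_apply, Pi.single_apply]

lemma rotM_mul_rotM_neg (i j : Fin m) (hij : i ≠ j) (t : ℝ) :
    rotM i j t * rotM i j (-t) = 1 := by
  apply matrix_eq_one_of_mulVec
  intro z
  funext p
  rw [← Matrix.mulVec_mulVec, rotM_mulVec_apply i j hij t _ p]
  have h1 := rotM_mulVec_apply i j hij (-t) z i
  have h2 := rotM_mulVec_apply i j hij (-t) z j
  have h3 := rotM_mulVec_apply i j hij (-t) z p
  rw [if_pos rfl] at h1
  rw [if_neg (Ne.symm hij), if_pos rfl] at h2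
  have hpyth := Real.cos_sq_add_sin_sq t
  rw [Real.cos_neg, Real.sin_neg] at h1 h2
  by_cases hpi : p = i
  · subst hpi
    rw [if_pos rfl]
    linear_combination Real.cos t * h1 - Real.sin t * h2 + z p * hpyth
  · by_cases hpj : p = j
    · subst hpj
      rw [if_neg hpi, if_pos rfl]
      linear_combination Real.sin t * h1 + Real.cos t * h2 + z p * hpyth
    · rw [if_neg hpi, if_neg hpj, h3, if_neg hpi, if_neg hpj]

lemma rotM_mem (i j : Fin m) (hij : i ≠ j) (t : ℝ) :
    rotM i j t ∈ Matrix.orthogonalGroup (Fin m) ℝ := by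
  rw [Matrix.mem_orthogonalGroup_iff, ← Matrix.conjTranspose_eq_transpose_of_trivial,
    ← Matrix.star_eq_conjTranspose, rotM_star]
  exact rotM_mul_rotM_neg i j hij t

end Rot2
section Key

open MeasureTheory

variable {m : ℕ}

/-- The orthogonal group as a type. -/
abbrev OGT (m : ℕ) := ↥(Matrix.orthogonalGroup (Fin m) ℝ)



/-- Orthogonal matrices preserve the sum of squares of coordinates. -/
lemma mulVec_sq_sum (Q : OGT m) (w : Fin m → ℝ) :
    ∑ p, ((Q : Matrix (Fin m) (Fin m) ℝ).mulVec w p) ^ 2 = ∑ p, w p ^ 2 := by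
  have hQ : star (Q : Matrix (Fin m) (Fin m) ℝ) * (Q : Matrix (Fin m) (Fin m) ℝ) = 1 :=
    Q.2.1
  have hcol : ∀ j k : Fin m, ∑ p, (Q : Matrix (Fin m) (Fin m) ℝ) p j *
      (Q : Matrix (Fin m) (Fin m) ℝ) p k = if j = k then 1 else 0 := by
    intro j k
    have := congrFun (congrFun hQ j) k
    rw [Matrix.mul_apply] at this
    simp only [Matrix.star_eq_conjTranspose, Matrix.conjTranspose_apply, star_trivial] at this
    rw [this, Matrix.one_apply]
  calc ∑ p, ((Q : Matrix (Fin m) (Fin m) ℝ).mulVec w p) ^ 2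
      = ∑ p, ∑ j, ∑ k, ((Q : Matrix (Fin m) (Fin m) ℝ) p j *
          (Q : Matrix (Fin m) (Fin m) ℝ) p k) * (w j * w k) := by
        refine Finset.sum_congr rfl fun p _ => ?_
        rw [Matrix.mulVec, dotProduct, sq, Finset.sum_mul_sum]
        refine Finset.sum_congr rfl fun j _ => Finset.sum_congr rfl fun k _ => by ring
    _ = ∑ j, ∑ k, (∑ p, (Q : Matrix (Fin m) (Fin m) ℝ) p j *
          (Q : Matrix (Fin m) (Fin m) ℝ) p k) * (w j * w k) := by
        rw [Finset.sum_comm]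
        refine Finset.sum_congr rfl fun j _ => ?_
        rw [Finset.sum_comm]
        refine Finset.sum_congr rfl fun k _ => ?_
        rw [Finset.sum_mul]
    _ = ∑ j, ∑ k, (if j = k then (1:ℝ) else 0) * (w j * w k) := by
        refine Finset.sum_congr rfl fun j _ => Finset.sum_congr rfl fun k _ => by rw [hcol]
    _ = ∑ j, w j ^ 2 := by
        refine Finset.sum_congr rfl fun j _ => ?_
        simp only [ite_mul, one_mul, zero_mul, Finset.sum_ite_eq, Finset.mem_univ, if_true]
        ring

/-- Orthogonal matrices act injectively on vectors. -/
lemma mulVec_inj (Q : OGT m) (v w : Fin m → ℝ)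
    (h : (Q : Matrix (Fin m) (Fin m) ℝ).mulVec v = (Q : Matrix (Fin m) (Fin m) ℝ).mulVec w) :
    v = w := by
  have hQ : star (Q : Matrix (Fin m) (Fin m) ℝ) * (Q : Matrix (Fin m) (Fin m) ℝ) = 1 := Q.2.1
  calc v = (1 : Matrix (Fin m) (Fin m) ℝ).mulVec v := by rw [Matrix.one_mulVec]
    _ = (star (Q : Matrix (Fin m) (Fin m) ℝ)).mulVec
        ((Q : Matrix (Fin m) (Fin m) ℝ).mulVec v) := by rw [Matrix.mulVec_mulVec, hQ]
    _ = (star (Q : Matrix (Fin m) (Fin m) ℝ)).mulVec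
        ((Q : Matrix (Fin m) (Fin m) ℝ).mulVec w) := by rw [h]
    _ = (1 : Matrix (Fin m) (Fin m) ℝ).mulVec w := by rw [Matrix.mulVec_mulVec, hQ]
    _ = w := Matrix.one_mulVec w

/-- Sums of squares over a set of coordinates containing both rotated indices
are invariant under a Givens rotation. -/
lemma rotM_tail_sq (i j : Fin m) (hij : i ≠ j) (t : ℝ) (z : Fin m → ℝ)
    (s : Finset (Fin m)) (hi : i ∈ s) (hj : j ∈ s) :
    ∑ r ∈ s, ((rotM i j t).mulVec z r) ^ 2 = ∑ r ∈ s, z r ^ 2 := by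
  have hpyth := Real.cos_sq_add_sin_sq t
  have hjs : j ∈ s.erase i := Finset.mem_erase.2 ⟨Ne.symm hij, hj⟩
  rw [← Finset.sum_erase_add s _ hi, ← Finset.sum_erase_add (s.erase i) _ hjs,
    ← Finset.sum_erase_add s (fun r => z r ^ 2) hi,
    ← Finset.sum_erase_add (s.erase i) (fun r => z r ^ 2) hjs]
  have hcong : ∑ r ∈ (s.erase i).erase j, ((rotM i j t).mulVec z r) ^ 2
      = ∑ r ∈ (s.erase i).erase j, z r ^ 2 := by
    refine Finset.sum_congr rfl fun r hr => ?_
    have hri : r ≠ i := Finset.ne_of_mem_erase (Finset.mem_of_mem_erase hr)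
    have hrj : r ≠ j := Finset.ne_of_mem_erase hr
    rw [rotM_mulVec_apply i j hij t z r, if_neg hri, if_neg hrj]
  rw [hcong]
  have hvi := rotM_mulVec_apply i j hij t z i
  have hvj := rotM_mulVec_apply i j hij t z j
  rw [if_pos rfl] at hvi
  rw [if_neg (Ne.symm hij), if_pos rfl] at hvj
  rw [hvi, hvj]
  ring_nf
  nlinarith [hpyth, sq_nonneg (z i), sq_nonneg (z j)]



/-- The Givens rotation as an element of the orthogonal group. -/
def rotG (i j : Fin m) (hij : i ≠ j) (t : ℝ) : ↥(Matrix.orthogonalGroup (Fin m) ℝ) :=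
  ⟨rotM i j t, rotM_mem i j hij t⟩

lemma measurable_rotM_entry (i j a b : Fin m) :
    Measurable (fun t : ℝ => rotM i j t a b) := by
  unfold rotM
  by_cases hji : j = i <;> by_cases h1 : a = i <;> by_cases h2 : a = j <;>
    by_cases h3 : b = i <;> by_cases h4 : b = j <;>
    simp [hji, h1, h2, h3, h4] <;>
    first
      | exact Real.measurable_cos
      | exact Real.measurable_sin
      | exact Real.measurable_sin.neg
      | exact measurable_const

lemma measurable_val : Measurable (fun Q : OGT m => (Q : Matrix (Fin m) (Fin m) ℝ)) :=
  measurable_subtype_coe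

lemma measurable_entry (a b : Fin m) :
    Measurable (fun Q : OGT m => (Q : Matrix (Fin m) (Fin m) ℝ) a b) := by
  have h1 : Measurable (fun M : Matrix (Fin m) (Fin m) ℝ => M a b) :=
    (measurable_pi_apply b).comp (measurable_pi_apply a)
  exact h1.comp measurable_val

lemma measurable_mulVec_entry (w : Fin m → ℝ) (p : Fin m) :
    Measurable (fun Q : OGT m => (Q : Matrix (Fin m) (Fin m) ℝ).mulVec w p) := by
  have : (fun Q : OGT m => (Q : Matrix (Fin m) (Fin m) ℝ).mulVec w p)
      = fun Q : OGT m => ∑ k, (Q : Matrix (Fin m) (Fin m) ℝ) p k * w k := by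
    funext Q; rfl
  rw [this]
  exact Finset.measurable_sum _ (fun k _ => (measurable_entry p k).mul measurable_const)

lemma measurable_rot_mul (i j : Fin m) (hij : i ≠ j) :
    Measurable (fun x : ℝ × OGT m => rotG i j hij x.1 * x.2) := by
  apply Measurable.subtype_mk
  show Measurable fun x : ℝ × OGT m => rotM i j x.1 * (x.2 : Matrix (Fin m) (Fin m) ℝ)
  apply measurable_pi_lambda
  intro a
  apply measurable_pi_lambda
  intro b
  have : (fun x : ℝ × OGT m => (rotM i j x.1 * (x.2 : Matrix (Fin m) (Fin m) ℝ)) a b)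
      = fun x : ℝ × OGT m => ∑ k, rotM i j x.1 a k * (x.2 : Matrix (Fin m) (Fin m) ℝ) k b := by
    funext x; rw [Matrix.mul_apply]
  rw [this]
  refine Finset.measurable_sum _ (fun k _ => Measurable.mul ?_ ?_)
  · exact (measurable_rotM_entry i j a k).comp measurable_fst
  · exact (measurable_entry k b).comp measurable_snd

set_option synthInstance.maxHeartbeats 1000000 in
/-- The key Fubini-type step: if, outside `E'`, the set of rotation angles carrying
`Q` into `E` is countable, then `μ E ≤ μ E'`. -/
lemma key_step (μ : Measure (OGT m)) [IsProbabilityMeasure μ]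
    (hinv : ∀ Q : OGT m, MeasurePreserving (fun R => Q * R) μ μ)
    (i j : Fin m) (hij : i ≠ j)
    (E E' : Set (OGT m)) (hE : MeasurableSet E) (hE' : MeasurableSet E')
    (hfib : ∀ Q : OGT m, Q ∉ E' → {t : ℝ | rotG i j hij t * Q ∈ E}.Countable) :
    μ E ≤ μ E' := by
  set ν : Measure ℝ := volume.restrict (Set.Ioc (0:ℝ) 1) with hν
  have hνuniv : ν Set.univ = 1 := by
    rw [hν, Measure.restrict_apply_univ, Real.volume_Ioc]
    norm_num
  have hνprob : IsProbabilityMeasure ν := ⟨hνuniv⟩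
  set S : Set (ℝ × OGT m) := (fun x : ℝ × OGT m => rotG i j hij x.1 * x.2) ⁻¹' E with hS
  have hSm : MeasurableSet S := (measurable_rot_mul i j hij) hE
  have step1 : μ E = ∫⁻ t, μ ((fun Q => rotG i j hij t * Q) ⁻¹' E) ∂ν := by
    have : ∀ t : ℝ, μ ((fun Q => rotG i j hij t * Q) ⁻¹' E) = μ E := fun t =>
      (hinv (rotG i j hij t)).measure_preimage hE.nullMeasurableSet
    simp only [this]
    rw [lintegral_const]
    rw [hνuniv, mul_one]
  have step2 : ∀ t : ℝ, μ ((fun Q => rotG i j hij t * Q) ⁻¹' E)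
      = ∫⁻ Q, S.indicator (fun _ => (1 : ENNReal)) (t, Q) ∂μ := by
    intro t
    have hsec : MeasurableSet {Q : OGT m | (t, Q) ∈ S} := measurable_prodMk_left hSm
    have : (fun Q : OGT m => S.indicator (fun _ => (1 : ENNReal)) (t, Q))
        = Set.indicator {Q : OGT m | (t, Q) ∈ S} (fun _ => (1 : ENNReal)) := by
      funext Q
      by_cases h : (t, Q) ∈ S <;> simp [Set.indicator_apply, h]
    rw [this, lintegral_indicator hsec]
    rw [lintegral_one, Measure.restrict_apply_univ]
    rfl
  have swap : ∫⁻ t, ∫⁻ Q, S.indicator (fun _ => (1 : ENNReal)) (t, Q) ∂μ ∂ν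
      = ∫⁻ Q, ∫⁻ t, S.indicator (fun _ => (1 : ENNReal)) (t, Q) ∂ν ∂μ := by
    apply lintegral_lintegral_swap
    exact ((measurable_const.indicator hSm)).aemeasurable
  have step3 : ∀ Q : OGT m, ∫⁻ t, S.indicator (fun _ => (1 : ENNReal)) (t, Q) ∂ν
      ≤ E'.indicator (fun _ => (1 : ENNReal)) Q := by
    intro Q
    by_cases hQ : Q ∈ E'
    · calc ∫⁻ t, S.indicator (fun _ => (1 : ENNReal)) (t, Q) ∂ν
          ≤ ∫⁻ _, (1 : ENNReal) ∂ν := lintegral_mono (fun t => Set.indicator_le_self _ _ _)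
        _ = 1 := by rw [lintegral_const, hνuniv, mul_one]
        _ = E'.indicator (fun _ => (1 : ENNReal)) Q := by simp [hQ]
    · have hcnt := hfib Q hQ
      have hzero : ν {t : ℝ | rotG i j hij t * Q ∈ E} = 0 := by
        refine le_antisymm ?_ (zero_le)
        calc ν {t : ℝ | rotG i j hij t * Q ∈ E}
            ≤ volume {t : ℝ | rotG i j hij t * Q ∈ E} := Measure.restrict_le_self _
          _ = 0 := hcnt.measure_zero _
      have heq : (fun t : ℝ => S.indicator (fun _ => (1 : ENNReal)) (t, Q))
          = Set.indicator {t : ℝ | rotG i j hij t * Q ∈ E} (fun _ => (1 : ENNReal)) := by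
        funext t
        have hmem : ((t, Q) ∈ S) ↔ (t ∈ {t : ℝ | rotG i j hij t * Q ∈ E}) := Iff.rfl
        by_cases h : (t, Q) ∈ S
        · rw [Set.indicator_of_mem h, Set.indicator_of_mem (hmem.1 h)]
        · rw [Set.indicator_of_notMem h, Set.indicator_of_notMem (fun hh => h (hmem.2 hh))]
      rw [heq]
      have hsec : MeasurableSet {t : ℝ | rotG i j hij t * Q ∈ E} :=
        (measurable_id.prodMk measurable_const) hSm
      rw [lintegral_indicator hsec, lintegral_one, Measure.restrict_apply_univ, hzero]
      exact zero_le
  calc μ E = ∫⁻ t, μ ((fun Q => rotG i j hij t * Q) ⁻¹' E) ∂ν := step1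
    _ = ∫⁻ t, ∫⁻ Q, S.indicator (fun _ => (1 : ENNReal)) (t, Q) ∂μ ∂ν := by
        refine lintegral_congr fun t => step2 t
    _ = ∫⁻ Q, ∫⁻ t, S.indicator (fun _ => (1 : ENNReal)) (t, Q) ∂ν ∂μ := swap
    _ ≤ ∫⁻ Q, E'.indicator (fun _ => (1 : ENNReal)) Q ∂μ := lintegral_mono step3
    _ = μ E' := by rw [lintegral_indicator hE']; simp

end Key
section PartOne

open MeasureTheory

variable {m : ℕ}

lemma measurableSet_eq_zero (f : OGT m → ℝ) (hf : Measurable f) :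
    MeasurableSet {Q : OGT m | f Q = 0} := by
  have : {Q : OGT m | f Q = 0} = f ⁻¹' {0} := rfl
  rw [this]
  exact hf (measurableSet_singleton 0)

/-- Almost surely, a fixed coordinate of the image of a fixed unit vector
under a random rotation is nonzero. -/
lemma zero_coord (μ : Measure (OGT m)) [IsProbabilityMeasure μ]
    (hinv : ∀ Q : OGT m, MeasurePreserving (fun R => Q * R) μ μ)
    (w : Fin m → ℝ) (hw : ∑ j, w j ^ 2 = 1) (i : Fin m) :
    μ {Q : OGT m | (Q : Matrix (Fin m) (Fin m) ℝ).mulVec w i = 0} = 0 := by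
  set x : OGT m → Fin m → ℝ := fun Q => (Q : Matrix (Fin m) (Fin m) ℝ).mulVec w with hx
  set D : Finset (Fin m) → Set (OGT m) := fun s => {Q | ∀ j ∈ s, x Q j = 0} with hD
  have hDm : ∀ s, MeasurableSet (D s) := by
    intro s
    have : D s = ⋂ j ∈ (s : Set (Fin m)), {Q | x Q j = 0} := by
      ext Q; simp [hD]
    rw [this]
    exact MeasurableSet.biInter s.countable_toSet
      (fun j _ => measurableSet_eq_zero _ (measurable_mulVec_entry w j))
  -- the rotated coordinates
  have hrot : ∀ (a b : Fin m) (hab : a ≠ b) (t : ℝ) (Q : OGT m) (p : Fin m),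
      x (rotG a b hab t * Q) p =
        if p = a then Real.cos t * x Q a - Real.sin t * x Q b
        else if p = b then Real.sin t * x Q a + Real.cos t * x Q b
        else x Q p := by
    intro a b hab t Q p
    have : x (rotG a b hab t * Q) = (rotM a b t).mulVec (x Q) := by
      rw [hx]
      show (rotM a b t * (Q : Matrix (Fin m) (Fin m) ℝ)).mulVec w = _
      rw [← Matrix.mulVec_mulVec]
    rw [this, rotM_mulVec_apply a b hab t (x Q) p]
  -- main descending induction
  have main : ∀ (n : ℕ) (s : Finset (Fin m)), i ∈ s →
      (Finset.univ : Finset (Fin m)).card ≤ s.card + n → μ (D s) = 0 := by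
    intro n
    induction n with
    | zero =>
      intro s hi hcard
      have hs : s = Finset.univ :=
        Finset.eq_of_subset_of_card_le (Finset.subset_univ s) (by simpa using hcard)
      have : D s = ∅ := by
        ext Q
        simp only [hD, Set.mem_setOf_eq, Set.mem_empty_iff_false, iff_false]
        intro hall
        have hzero : ∀ j, x Q j = 0 := fun j => hall j (hs ▸ Finset.mem_univ j)
        have h1 : ∑ p, x Q p ^ 2 = 1 := by
          rw [hx]; rw [mulVec_sq_sum Q w]; exact hw
        rw [Finset.sum_congr rfl (fun p _ => by rw [hzero p])] at h1
        simp at h1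
      rw [this]; simp
    | succ n ih =>
      intro s hi hcard
      by_cases hs : s = Finset.univ
      · exact ih s hi (by rw [hs]; omega)
      · obtain ⟨k, hk⟩ : ∃ k, k ∉ s := by
          by_contra h
          push_neg at h
          exact hs (Finset.eq_univ_iff_forall.2 h)
        have hik : i ≠ k := fun h => hk (h ▸ hi)
        have hstep : μ (D s) ≤ μ (D (insert k s)) := by
          apply key_step μ hinv i k hik _ _ (hDm s) (hDm (insert k s))
          intro Q hQ
          -- find a violated coordinate
          simp only [hD, Set.mem_setOf_eq, not_forall] at hQ
          obtain ⟨j₀, hj₀mem, hj₀⟩ := hQ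
          rcases Finset.mem_insert.1 hj₀mem with hj₀k | hj₀s
          · -- j₀ = k : use the fiber condition at coordinate i
            subst hj₀k
            have hsub : {t : ℝ | rotG i j₀ hik t * Q ∈ D s} ⊆
                {t : ℝ | x Q i * Real.cos t + (-(x Q j₀)) * Real.sin t + 0 = 0} := by
              intro t ht
              have := ht i hi
              rw [hrot i j₀ hik t Q i, if_pos rfl] at this
              simp only [Set.mem_setOf_eq]
              linarith [this]
            refine Set.Countable.mono hsub (countable_affine_trig _ _ _ ?_)
            rintro ⟨h1, h2, _⟩
            exact hj₀ (by linarith [h2])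
          · by_cases hj₀i : j₀ = i
            · subst hj₀i
              have hsub : {t : ℝ | rotG j₀ k hik t * Q ∈ D s} ⊆
                  {t : ℝ | x Q j₀ * Real.cos t + (-(x Q k)) * Real.sin t + 0 = 0} := by
                intro t ht
                have := ht j₀ hj₀s
                rw [hrot j₀ k hik t Q j₀, if_pos rfl] at this
                simp only [Set.mem_setOf_eq]
                linarith [this]
              refine Set.Countable.mono hsub (countable_affine_trig _ _ _ ?_)
              rintro ⟨h1, h2, _⟩
              exact hj₀ (by linarith [h1])
            · -- coordinate j₀ is untouched by the rotation: fiber is empty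
              have hsub : {t : ℝ | rotG i k hik t * Q ∈ D s} ⊆ (∅ : Set ℝ) := by
                intro t ht
                have := ht j₀ hj₀s
                rw [hrot i k hik t Q j₀, if_neg hj₀i, if_neg (fun (h : j₀ = k) => hk (h ▸ hj₀s))] at this
                exact absurd this hj₀
              exact Set.Countable.mono hsub Set.countable_empty
        have := ih (insert k s) (Finset.mem_insert_of_mem hi)
          (by rw [Finset.card_insert_of_notMem hk]; omega)
        exact le_antisymm (le_trans hstep (le_of_eq this)) (zero_le)
  have : {Q : OGT m | (Q : Matrix (Fin m) (Fin m) ℝ).mulVec w i = 0} = D {i} := by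
    ext Q; simp [hD, hx]
  rw [this]
  exact main m {i} (Finset.mem_singleton_self i) (by simp)

end PartOne
section PartTwo

open MeasureTheory

variable {m : ℕ}

set_option maxHeartbeats 1000000 in
lemma pair_nondeg (μ : Measure (OGT m)) [IsProbabilityMeasure μ]
    (hinv : ∀ Q : OGT m, MeasurePreserving (fun R => Q * R) μ μ)
    (w₁ w₂ : Fin m → ℝ) (hw1 : ∑ j, w₁ j ^ 2 = 1) (hw2 : ∑ j, w₂ j ^ 2 = 1)
    (hne : w₁ ≠ w₂) (hne' : w₁ ≠ -w₂) (i : Fin m) (hi1 : (i : ℕ) + 1 < m) :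
    μ {Q : OGT m |
      ((Q : Matrix (Fin m) (Fin m) ℝ).mulVec w₂ i) ^ 2 *
          ∑ j ∈ Finset.univ.filter (fun j : Fin m => i < j),
            ((Q : Matrix (Fin m) (Fin m) ℝ).mulVec w₁ j) ^ 2 =
        ((Q : Matrix (Fin m) (Fin m) ℝ).mulVec w₁ i) ^ 2 *
          ∑ j ∈ Finset.univ.filter (fun j : Fin m => i < j),
            ((Q : Matrix (Fin m) (Fin m) ℝ).mulVec w₂ j) ^ 2} = 0 := by
  classical
  set x : OGT m → Fin m → ℝ := fun Q => (Q : Matrix (Fin m) (Fin m) ℝ).mulVec w₁ with hx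
  set y : OGT m → Fin m → ℝ := fun Q => (Q : Matrix (Fin m) (Fin m) ℝ).mulVec w₂ with hy
  set i1 : Fin m := ⟨(i : ℕ) + 1, hi1⟩ with hi1def
  have hii1 : i ≠ i1 := by
    intro h
    have := congrArg Fin.val h
    simp [hi1def] at this
  have hlti1 : i < i1 := by
    rw [Fin.lt_def]; simp [hi1def]
  set tailLe : Finset (Fin m) := Finset.univ.filter (fun j => i ≤ j) with htailLe
  set tailLt : Finset (Fin m) := Finset.univ.filter (fun j => i < j) with htailLt
  set lows : Finset (Fin m) := Finset.univ.filter (fun j => j < i) with hlows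
  have hitail : i ∈ tailLe := by simp [htailLe]
  have hi1tail : i1 ∈ tailLe := by simp [htailLe]; exact le_of_lt hlti1
  have hile : tailLe = insert i tailLt := by
    ext j
    simp only [htailLe, htailLt, Finset.mem_filter, Finset.mem_univ, true_and,
      Finset.mem_insert]
    constructor
    · intro h
      rcases eq_or_lt_of_le h with h | h
      · left; exact h.symm
      · right; exact h
    · rintro (h | h)
      · exact le_of_eq h.symm
      · exact le_of_lt h
  have hinotlt : i ∉ tailLt := by simp [htailLt]
  set S1 : OGT m → ℝ := fun Q => ∑ j ∈ tailLe, x Q j ^ 2 with hS1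
  set S2 : OGT m → ℝ := fun Q => ∑ j ∈ tailLe, y Q j ^ 2 with hS2
  set df : OGT m → Fin m → Fin m → ℝ :=
    fun Q p q => S1 Q * (y Q p * y Q q) - S2 Q * (x Q p * x Q q) with hdf
  set mn : OGT m → Fin m → Fin m → ℝ :=
    fun Q p q => x Q p * y Q q - x Q q * y Q p with hmn
  set predB : Finset (Fin m) → Fin m → Fin m → Prop :=
    fun L p q => (i ≤ p ∧ i ≤ q) ∨ (p ∈ L ∧ i < q) ∨ (q ∈ L ∧ i < p) with hpredB
  set E0 : Set (OGT m) := {Q | y Q i ^ 2 * ∑ j ∈ tailLt, x Q j ^ 2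
      = x Q i ^ 2 * ∑ j ∈ tailLt, y Q j ^ 2} with hE0
  set CC : Finset (Fin m) → Set (OGT m) :=
    fun s => {Q | ∀ p ∈ s, ∀ q ∈ s, df Q p q = 0} with hCC
  set MB : Finset (Fin m) → Set (OGT m) :=
    fun L => {Q | ∀ p q, predB L p q → mn Q p q = 0} with hMB
  set G : Set (OGT m) := {Q | ∀ p, x Q p ≠ 0 ∧ y Q p ≠ 0} with hG
  -- measurability facts
  have hxm : ∀ p, Measurable (fun Q => x Q p) := fun p => measurable_mulVec_entry w₁ p
  have hym : ∀ p, Measurable (fun Q => y Q p) := fun p => measurable_mulVec_entry w₂ p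
  have hS1m : Measurable S1 := by
    rw [hS1]; exact Finset.measurable_sum _ (fun j _ => (hxm j).pow_const 2)
  have hS2m : Measurable S2 := by
    rw [hS2]; exact Finset.measurable_sum _ (fun j _ => (hym j).pow_const 2)
  have hdfm : ∀ p q, Measurable (fun Q => df Q p q) := by
    intro p q
    exact (hS1m.mul ((hym p).mul (hym q))).sub (hS2m.mul ((hxm p).mul (hxm q)))
  have hmnm : ∀ p q, Measurable (fun Q => mn Q p q) := by
    intro p q
    exact ((hxm p).mul (hym q)).sub ((hxm q).mul (hym p))
  have hE0m : MeasurableSet E0 := by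
    rw [hE0]
    have : {Q : OGT m | y Q i ^ 2 * ∑ j ∈ tailLt, x Q j ^ 2
        = x Q i ^ 2 * ∑ j ∈ tailLt, y Q j ^ 2}
        = {Q : OGT m | y Q i ^ 2 * ∑ j ∈ tailLt, x Q j ^ 2
            - x Q i ^ 2 * ∑ j ∈ tailLt, y Q j ^ 2 = 0} := by
      ext Q; simp [sub_eq_zero]
    rw [this]
    apply measurableSet_eq_zero
    exact (((hym i).pow_const 2).mul
        (Finset.measurable_sum _ (fun j _ => (hxm j).pow_const 2))).sub
      (((hxm i).pow_const 2).mul (Finset.measurable_sum _ (fun j _ => (hym j).pow_const 2)))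
  have hCCm : ∀ s, MeasurableSet (CC s) := by
    intro s
    have : CC s = ⋂ p ∈ (s : Set (Fin m)), ⋂ q ∈ (s : Set (Fin m)), {Q | df Q p q = 0} := by
      ext Q; simp [hCC]
    rw [this]
    exact MeasurableSet.biInter s.countable_toSet (fun p _ =>
      MeasurableSet.biInter s.countable_toSet (fun q _ =>
        measurableSet_eq_zero _ (hdfm p q)))
  have hMBm : ∀ L, MeasurableSet (MB L) := by
    intro L
    have : MB L = ⋂ p, ⋂ q, {Q | predB L p q → mn Q p q = 0} := by
      ext Q; simp [hMB]
    rw [this]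
    refine MeasurableSet.iInter fun p => MeasurableSet.iInter fun q => ?_
    by_cases h : predB L p q
    · have : {Q : OGT m | predB L p q → mn Q p q = 0} = {Q | mn Q p q = 0} := by
        ext Q; simp [h]
      rw [this]; exact measurableSet_eq_zero _ (hmnm p q)
    · have : {Q : OGT m | predB L p q → mn Q p q = 0} = Set.univ := by
        ext Q; simp [h]
      rw [this]; exact MeasurableSet.univ
  -- complement of the genericity event is null
  have hGm : MeasurableSet G := by
    have : G = ⋂ p, ({Q | x Q p = 0}ᶜ ∩ {Q | y Q p = 0}ᶜ) := by
      ext Q; simp [hG]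
    rw [this]
    exact MeasurableSet.iInter fun p =>
      ((measurableSet_eq_zero _ (hxm p)).compl).inter ((measurableSet_eq_zero _ (hym p)).compl)
  have hGc : μ Gᶜ = 0 := by
    have hsub : Gᶜ ⊆ ⋃ p, ({Q | x Q p = 0} ∪ {Q | y Q p = 0}) := by
      intro Q hQ
      simp only [hG, Set.mem_compl_iff, Set.mem_setOf_eq, not_forall] at hQ
      obtain ⟨p, hp⟩ := hQ
      rcases not_and_or.1 hp with h | h
      · exact Set.mem_iUnion.2 ⟨p, Or.inl (not_not.1 h)⟩
      · exact Set.mem_iUnion.2 ⟨p, Or.inr (not_not.1 h)⟩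
    refine measure_mono_null hsub ?_
    refine measure_iUnion_null fun p => measure_union_null ?_ ?_
    · exact zero_coord μ hinv w₁ hw1 p
    · exact zero_coord μ hinv w₂ hw2 p
  -- coordinates of rotated points
  have hcoord : ∀ (wv : Fin m → ℝ) (a b : Fin m) (hab : a ≠ b) (t : ℝ) (Q : OGT m),
      ((rotG a b hab t * Q : OGT m) : Matrix (Fin m) (Fin m) ℝ).mulVec wv
        = (rotM a b t).mulVec ((Q : Matrix (Fin m) (Fin m) ℝ).mulVec wv) := by
    intro wv a b hab t Q
    show (rotM a b t * (Q : Matrix (Fin m) (Fin m) ℝ)).mulVec wv = _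
    rw [← Matrix.mulVec_mulVec]
  have hxR : ∀ (a b : Fin m) (hab : a ≠ b) (t : ℝ) (Q : OGT m) (p : Fin m),
      x (rotG a b hab t * Q) p =
        if p = a then Real.cos t * x Q a - Real.sin t * x Q b
        else if p = b then Real.sin t * x Q a + Real.cos t * x Q b
        else x Q p := by
    intro a b hab t Q p
    rw [hx]
    show (((rotG a b hab t * Q : OGT m) : Matrix (Fin m) (Fin m) ℝ).mulVec w₁) p = _
    rw [hcoord w₁ a b hab t Q, rotM_mulVec_apply a b hab t _ p]
  have hyR : ∀ (a b : Fin m) (hab : a ≠ b) (t : ℝ) (Q : OGT m) (p : Fin m),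
      y (rotG a b hab t * Q) p =
        if p = a then Real.cos t * y Q a - Real.sin t * y Q b
        else if p = b then Real.sin t * y Q a + Real.cos t * y Q b
        else y Q p := by
    intro a b hab t Q p
    rw [hy]
    show (((rotG a b hab t * Q : OGT m) : Matrix (Fin m) (Fin m) ℝ).mulVec w₂) p = _
    rw [hcoord w₂ a b hab t Q, rotM_mulVec_apply a b hab t _ p]
  have hS1R : ∀ (a b : Fin m) (hab : a ≠ b) (ha : a ∈ tailLe) (hb : b ∈ tailLe)
      (t : ℝ) (Q : OGT m), S1 (rotG a b hab t * Q) = S1 Q := by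
    intro a b hab ha hb t Q
    rw [hS1]
    show ∑ j ∈ tailLe, x (rotG a b hab t * Q) j ^ 2 = _
    have : ∀ j, x (rotG a b hab t * Q) j = (rotM a b t).mulVec (x Q) j := by
      intro j
      rw [hx]
      show (((rotG a b hab t * Q : OGT m) : Matrix (Fin m) (Fin m) ℝ).mulVec w₁) j = _
      rw [hcoord w₁ a b hab t Q]
    rw [Finset.sum_congr rfl (fun j _ => by rw [this j])]
    exact rotM_tail_sq a b hab t (x Q) tailLe ha hb
  have hS2R : ∀ (a b : Fin m) (hab : a ≠ b) (ha : a ∈ tailLe) (hb : b ∈ tailLe)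
      (t : ℝ) (Q : OGT m), S2 (rotG a b hab t * Q) = S2 Q := by
    intro a b hab ha hb t Q
    rw [hS2]
    show ∑ j ∈ tailLe, y (rotG a b hab t * Q) j ^ 2 = _
    have : ∀ j, y (rotG a b hab t * Q) j = (rotM a b t).mulVec (y Q) j := by
      intro j
      rw [hy]
      show (((rotG a b hab t * Q : OGT m) : Matrix (Fin m) (Fin m) ℝ).mulVec w₂) j = _
      rw [hcoord w₂ a b hab t Q]
    rw [Finset.sum_congr rfl (fun j _ => by rw [this j])]
    exact rotM_tail_sq a b hab t (y Q) tailLe ha hb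
  -- norms
  have hxnorm : ∀ Q : OGT m, ∑ p, x Q p ^ 2 = 1 := by
    intro Q; rw [hx]; rw [mulVec_sq_sum Q w₁]; exact hw1
  have hynorm : ∀ Q : OGT m, ∑ p, y Q p ^ 2 = 1 := by
    intro Q; rw [hy]; rw [mulVec_sq_sum Q w₂]; exact hw2
  have hdfsymm : ∀ (Q : OGT m) (p q : Fin m), df Q p q = df Q q p := by
    intro Q p q; simp only [hdf]; ring
  -- Step 0 : from the original equation to the three defect equations
  have step0 : μ E0 ≤ μ (CC {i, i1}) := by
    apply key_step μ hinv i i1 hii1 _ _ hE0m (hCCm _)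
    intro Q hQ
    simp only [hCC, Set.mem_setOf_eq] at hQ
    push_neg at hQ
    obtain ⟨p₀, hp₀, q₀, hq₀, hv⟩ := hQ
    have hsub : {t : ℝ | rotG i i1 hii1 t * Q ∈ E0} ⊆
        {t : ℝ | df Q i i * Real.cos t ^ 2 + (-2 * df Q i i1) * (Real.cos t * Real.sin t)
          + df Q i1 i1 * Real.sin t ^ 2 = 0} := by
      intro t ht
      simp only [hE0, Set.mem_setOf_eq] at ht
      have hS1eq : S1 (rotG i i1 hii1 t * Q) = S1 Q := hS1R i i1 hii1 hitail hi1tail t Q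
      have hS2eq : S2 (rotG i i1 hii1 t * Q) = S2 Q := hS2R i i1 hii1 hitail hi1tail t Q
      have hxt : ∑ j ∈ tailLt, x (rotG i i1 hii1 t * Q) j ^ 2
          = S1 Q - x (rotG i i1 hii1 t * Q) i ^ 2 := by
        have h2 : S1 (rotG i i1 hii1 t * Q) = x (rotG i i1 hii1 t * Q) i ^ 2
            + ∑ j ∈ tailLt, x (rotG i i1 hii1 t * Q) j ^ 2 := by
          show ∑ j ∈ tailLe, x (rotG i i1 hii1 t * Q) j ^ 2 = _
          rw [hile, Finset.sum_insert hinotlt]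
        rw [hS1eq] at h2
        linarith
      have hyt : ∑ j ∈ tailLt, y (rotG i i1 hii1 t * Q) j ^ 2
          = S2 Q - y (rotG i i1 hii1 t * Q) i ^ 2 := by
        have h2 : S2 (rotG i i1 hii1 t * Q) = y (rotG i i1 hii1 t * Q) i ^ 2
            + ∑ j ∈ tailLt, y (rotG i i1 hii1 t * Q) j ^ 2 := by
          show ∑ j ∈ tailLe, y (rotG i i1 hii1 t * Q) j ^ 2 = _
          rw [hile, Finset.sum_insert hinotlt]
        rw [hS2eq] at h2
        linarith
      rw [hxt, hyt] at ht
      have hxi : x (rotG i i1 hii1 t * Q) i = Real.cos t * x Q i - Real.sin t * x Q i1 := by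
        rw [hxR i i1 hii1 t Q i, if_pos rfl]
      have hyi : y (rotG i i1 hii1 t * Q) i = Real.cos t * y Q i - Real.sin t * y Q i1 := by
        rw [hyR i i1 hii1 t Q i, if_pos rfl]
      rw [hxi, hyi] at ht
      simp only [Set.mem_setOf_eq, hdf]
      linear_combination ht
    refine Set.Countable.mono hsub (countable_quad_trig _ _ _ ?_)
    rintro ⟨hA, hB, hC⟩
    have hAB : df Q i i1 = 0 := by linarith
    apply hv
    have hmem : ∀ r ∈ ({i, i1} : Finset (Fin m)), r = i ∨ r = i1 := by
      intro r hr
      simpa using hr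
    rcases hmem p₀ hp₀ with h | h <;> rcases hmem q₀ hq₀ with h' | h' <;> subst h <;> subst h'
    · exact hA
    · exact hAB
    · rw [hdfsymm]; exact hAB
    · exact hC
  -- Phase A step
  have stepA : ∀ (s : Finset (Fin m)) (k : Fin m), i ∈ s → i1 ∈ s → s ⊆ tailLe →
      k ∈ tailLe → k ∉ s → μ (CC s) ≤ μ (CC (insert k s)) := by
    intro s k his hi1s hssub hktail hks
    have hik1 : i1 ≠ k := fun h => hks (h ▸ hi1s)
    apply key_step μ hinv i1 k hik1 _ _ (hCCm s) (hCCm (insert k s))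
    intro Q hQ
    simp only [hCC, Set.mem_setOf_eq] at hQ
    push_neg at hQ
    obtain ⟨p₀, hp₀, q₀, hq₀, hv⟩ := hQ
    have hcomp0 : ∀ (t : ℝ) (p q : Fin m), p ≠ i1 → p ≠ k → q ≠ i1 → q ≠ k →
        df (rotG i1 k hik1 t * Q) p q = df Q p q := by
      intro t p q hp1 hpk hq1 hqk
      simp only [hdf]
      rw [hS1R i1 k hik1 hi1tail hktail t Q, hS2R i1 k hik1 hi1tail hktail t Q,
        hxR i1 k hik1 t Q p, hxR i1 k hik1 t Q q, hyR i1 k hik1 t Q p, hyR i1 k hik1 t Q q,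
        if_neg hp1, if_neg hpk, if_neg hq1, if_neg hqk, if_neg hp1, if_neg hpk,
        if_neg hq1, if_neg hqk]
    have hcomp1 : ∀ (t : ℝ) (p : Fin m), p ≠ i1 → p ≠ k →
        df (rotG i1 k hik1 t * Q) p i1
          = Real.cos t * df Q p i1 - Real.sin t * df Q p k := by
      intro t p hp1 hpk
      simp only [hdf]
      rw [hS1R i1 k hik1 hi1tail hktail t Q, hS2R i1 k hik1 hi1tail hktail t Q,
        hxR i1 k hik1 t Q p, hxR i1 k hik1 t Q i1, hyR i1 k hik1 t Q p, hyR i1 k hik1 t Q i1,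
        if_neg hp1, if_neg hpk, if_pos rfl, if_neg hp1, if_neg hpk, if_pos rfl]
      ring
    have hcomp2 : ∀ (t : ℝ),
        df (rotG i1 k hik1 t * Q) i1 i1
          = df Q i1 i1 * Real.cos t ^ 2 + (-2 * df Q i1 k) * (Real.cos t * Real.sin t)
            + df Q k k * Real.sin t ^ 2 := by
      intro t
      simp only [hdf]
      rw [hS1R i1 k hik1 hi1tail hktail t Q, hS2R i1 k hik1 hi1tail hktail t Q,
        hxR i1 k hik1 t Q i1, hyR i1 k hik1 t Q i1, if_pos rfl, if_pos rfl]
      ring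
    have hfib_lin : ∀ p : Fin m, p ∈ s → p ≠ i1 →
        {t : ℝ | rotG i1 k hik1 t * Q ∈ CC s} ⊆
          {t : ℝ | df Q p i1 * Real.cos t + (- df Q p k) * Real.sin t + 0 = 0} := by
      intro p hps hp1 t ht
      simp only [hCC, Set.mem_setOf_eq] at ht
      have hpk : p ≠ k := fun h => hks (h ▸ hps)
      have := ht p hps i1 hi1s
      rw [hcomp1 t p hp1 hpk] at this
      simp only [Set.mem_setOf_eq]
      linarith
    have hfib_quad : {t : ℝ | rotG i1 k hik1 t * Q ∈ CC s} ⊆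
        {t : ℝ | df Q i1 i1 * Real.cos t ^ 2 + (-2 * df Q i1 k) * (Real.cos t * Real.sin t)
          + df Q k k * Real.sin t ^ 2 = 0} := by
      intro t ht
      simp only [hCC, Set.mem_setOf_eq] at ht
      have := ht i1 hi1s i1 hi1s
      rw [hcomp2 t] at this
      simpa using this
    have hlin_ct : ∀ p : Fin m, p ∈ s → p ≠ i1 → (df Q p i1 ≠ 0 ∨ df Q p k ≠ 0) →
        {t : ℝ | rotG i1 k hik1 t * Q ∈ CC s}.Countable := by
      intro p hps hp1 hnz
      refine Set.Countable.mono (hfib_lin p hps hp1) (countable_affine_trig _ _ _ ?_)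
      rintro ⟨h1, h2, _⟩
      rcases hnz with h | h
      · exact h h1
      · exact h (by linarith)
    have hquad_ct : (df Q i1 i1 ≠ 0 ∨ df Q i1 k ≠ 0 ∨ df Q k k ≠ 0) →
        {t : ℝ | rotG i1 k hik1 t * Q ∈ CC s}.Countable := by
      intro hnz
      refine Set.Countable.mono hfib_quad (countable_quad_trig _ _ _ ?_)
      rintro ⟨h1, h2, h3⟩
      rcases hnz with h | h | h
      · exact h h1
      · exact h (by linarith)
      · exact h h3
    rcases Finset.mem_insert.1 hp₀ with hp0k | hp0s
    · subst hp0k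
      rcases Finset.mem_insert.1 hq₀ with hq0k | hq0s
      · subst hq0k
        exact hquad_ct (Or.inr (Or.inr hv))
      · by_cases hq01 : q₀ = i1
        · subst hq01
          exact hquad_ct (Or.inr (Or.inl (by rw [hdfsymm] at hv; exact hv)))
        · refine hlin_ct q₀ hq0s hq01 (Or.inr ?_)
          rw [hdfsymm] at hv; exact hv
    · rcases Finset.mem_insert.1 hq₀ with hq0k | hq0s
      · subst hq0k
        by_cases hp01 : p₀ = i1
        · subst hp01
          exact hquad_ct (Or.inr (Or.inl hv))
        · exact hlin_ct p₀ hp0s hp01 (Or.inr hv)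
      · by_cases hp01 : p₀ = i1
        · subst hp01
          by_cases hq01 : q₀ = i1
          · subst hq01
            exact hquad_ct (Or.inl hv)
          · refine hlin_ct q₀ hq0s hq01 (Or.inl ?_)
            rw [hdfsymm] at hv; exact hv
        · by_cases hq01 : q₀ = i1
          · subst hq01
            exact hlin_ct p₀ hp0s hp01 (Or.inl hv)
          · -- fiber is empty
            have hsub : {t : ℝ | rotG i1 k hik1 t * Q ∈ CC s} ⊆ (∅ : Set ℝ) := by
              intro t ht
              simp only [hCC, Set.mem_setOf_eq] at ht
              have := ht p₀ hp0s q₀ hq0s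
              rw [hcomp0 t p₀ q₀ hp01 (fun h => hks (h ▸ hp0s)) hq01
                (fun h => hks (h ▸ hq0s))] at this
              exact absurd this hv
            exact Set.Countable.mono hsub Set.countable_empty
  -- Phase A chain
  have chainA : ∀ (n : ℕ) (s : Finset (Fin m)), i ∈ s → i1 ∈ s → s ⊆ tailLe →
      tailLe.card ≤ s.card + n → μ (CC s) ≤ μ (CC tailLe) := by
    intro n
    induction n with
    | zero =>
      intro s his hi1s hssub hcard
      have : s = tailLe := Finset.eq_of_subset_of_card_le hssub (by simpa using hcard)
      rw [this]
    | succ n ih =>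
      intro s his hi1s hssub hcard
      by_cases hs : s = tailLe
      · rw [hs]
      · obtain ⟨k, hktail, hks⟩ := Finset.exists_of_ssubset (lt_of_le_of_ne hssub hs)
        calc μ (CC s) ≤ μ (CC (insert k s)) := stepA s k his hi1s hssub hktail hks
          _ ≤ μ (CC tailLe) := by
            apply ih (insert k s) (Finset.mem_insert_of_mem his)
              (Finset.mem_insert_of_mem hi1s) (Finset.insert_subset hktail hssub)
            rw [Finset.card_insert_of_notMem hks]
            omega
  -- Transition from defect conditions to minor conditions, on the generic event
  have hCtoM : CC tailLe ∩ G ⊆ MB ∅ := by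
    rintro Q ⟨hQC, hQG⟩
    simp only [hCC, Set.mem_setOf_eq] at hQC
    simp only [hG, Set.mem_setOf_eq] at hQG
    simp only [hMB, Set.mem_setOf_eq]
    intro p q hpq
    have hpq' : i ≤ p ∧ i ≤ q := by
      simp only [hpredB] at hpq
      rcases hpq with h | h | h
      · exact h
      · exact absurd h.1 (Finset.notMem_empty p)
      · exact absurd h.1 (Finset.notMem_empty q)
    have hps : p ∈ tailLe := by simp [htailLe, hpq'.1]
    have hqs : q ∈ tailLe := by simp [htailLe, hpq'.2]
    have h1 : df Q p q = 0 := hQC p hps q hqs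
    have h2 : df Q p p = 0 := hQC p hps p hps
    have hxipos : 0 < x Q i ^ 2 := by
      have := (hQG i).1
      positivity
    have hS1pos : 0 < S1 Q := by
      refine lt_of_lt_of_le hxipos ?_
      exact Finset.single_le_sum (fun j _ => sq_nonneg (x Q j)) hitail
    have hypne : y Q p ≠ 0 := (hQG p).2
    have hkey : mn Q p q * (S1 Q * y Q p) = 0 := by
      simp only [hmn]
      simp only [hdf] at h1 h2
      linear_combination x Q p * h1 - x Q q * h2
    rcases mul_eq_zero.1 hkey with h | h
    · exact h
    · exact absurd h (mul_ne_zero (ne_of_gt hS1pos) hypne)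
  -- Phase B step
  have stepB : ∀ (L : Finset (Fin m)) (l : Fin m), L ⊆ lows → l ∈ lows → l ∉ L →
      μ (MB L) ≤ μ (MB (insert l L)) := by
    intro L l hLsub hl hlL
    have hlowlt : ∀ j ∈ lows, j < i := fun j hj => by
      simpa [hlows] using hj
    have hlli : l < i := hlowlt l hl
    have hli : l ≠ i := ne_of_lt hlli
    apply key_step μ hinv l i hli _ _ (hMBm L) (hMBm (insert l L))
    intro Q hQ
    simp only [hMB, Set.mem_setOf_eq] at hQ
    push_neg at hQ
    obtain ⟨p₀, q₀, hpred, hv⟩ := hQ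
    have hmnsymm : ∀ p q : Fin m, mn Q p q = - mn Q q p := by
      intro p q; simp only [hmn]; ring
    have hmnii : ∀ p : Fin m, mn Q p p = 0 := by
      intro p; simp only [hmn]; ring
    have hmcomp0 : ∀ (t : ℝ) (p q : Fin m), p ≠ l → p ≠ i → q ≠ l → q ≠ i →
        mn (rotG l i hli t * Q) p q = mn Q p q := by
      intro t p q h1 h2 h3 h4
      simp only [hmn]
      rw [hxR l i hli t Q p, hxR l i hli t Q q, hyR l i hli t Q p, hyR l i hli t Q q,
        if_neg h1, if_neg h2, if_neg h3, if_neg h4, if_neg h1, if_neg h2, if_neg h3, if_neg h4]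
    have hmcomp1 : ∀ (t : ℝ) (q : Fin m), q ≠ l → q ≠ i →
        mn (rotG l i hli t * Q) i q
          = Real.cos t * mn Q i q + Real.sin t * mn Q l q := by
      intro t q h1 h2
      simp only [hmn]
      rw [hxR l i hli t Q i, hxR l i hli t Q q, hyR l i hli t Q i, hyR l i hli t Q q,
        if_neg (Ne.symm hli), if_pos rfl, if_neg h1, if_neg h2,
        if_neg (Ne.symm hli), if_pos rfl, if_neg h1, if_neg h2]
      ring
    have hfibB_lin : ∀ q : Fin m, i < q →
        {t : ℝ | rotG l i hli t * Q ∈ MB L} ⊆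
          {t : ℝ | mn Q i q * Real.cos t + mn Q l q * Real.sin t + 0 = 0} := by
      intro q hiq t ht
      simp only [hMB, Set.mem_setOf_eq] at ht
      have hql : q ≠ l := ne_of_gt (lt_trans hlli hiq)
      have hqi : q ≠ i := ne_of_gt hiq
      have := ht i q (Or.inl ⟨le_refl i, le_of_lt hiq⟩)
      rw [hmcomp1 t q hql hqi] at this
      simp only [Set.mem_setOf_eq]
      linarith
    have hlinB_ct : ∀ q : Fin m, i < q → (mn Q i q ≠ 0 ∨ mn Q l q ≠ 0) →
        {t : ℝ | rotG l i hli t * Q ∈ MB L}.Countable := by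
      intro q hiq hnz
      refine Set.Countable.mono (hfibB_lin q hiq) (countable_affine_trig _ _ _ ?_)
      rintro ⟨h1, h2, _⟩
      rcases hnz with h | h
      · exact h h1
      · exact h h2
    have hinotmem : i ∉ insert l L := by
      intro h
      rcases Finset.mem_insert.1 h with h | h
      · exact hli h.symm
      · exact absurd (hlowlt i (hLsub h)) (lt_irrefl i)
    simp only [hpredB] at hpred
    by_cases hp0l : p₀ = l
    · subst hp0l
      have hiq0 : i < q₀ := by
        rcases hpred with ⟨hc, _⟩ | ⟨_, hc⟩ | ⟨_, hc⟩
        · exact absurd hc (not_le.2 hlli)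
        · exact hc
        · exact absurd hc (not_lt.2 (le_of_lt hlli))
      exact hlinB_ct q₀ hiq0 (Or.inr hv)
    · by_cases hq0l : q₀ = l
      · subst hq0l
        have hip0 : i < p₀ := by
          rcases hpred with ⟨_, hc⟩ | ⟨_, hc⟩ | ⟨_, hc⟩
          · exact absurd hc (not_le.2 hlli)
          · exact absurd hc (not_lt.2 (le_of_lt hlli))
          · exact hc
        refine hlinB_ct p₀ hip0 (Or.inr ?_)
        rw [hmnsymm]
        simpa using hv
      · by_cases hp0i : p₀ = i
        · rw [hp0i] at hv hpred
          have hiq0le : i ≤ q₀ := by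
            rcases hpred with ⟨_, hc⟩ | ⟨hc, _⟩ | ⟨_, hc⟩
            · exact hc
            · exact absurd hc hinotmem
            · exact absurd hc (lt_irrefl i)
          have hq0i : q₀ ≠ i := by
            intro h
            exact hv (h ▸ hmnii i)
          exact hlinB_ct q₀ (lt_of_le_of_ne hiq0le (Ne.symm hq0i)) (Or.inl hv)
        · by_cases hq0i : q₀ = i
          · rw [hq0i] at hv hpred
            have hip0le : i ≤ p₀ := by
              rcases hpred with ⟨hc, _⟩ | ⟨_, hc⟩ | ⟨hc, _⟩
              · exact hc
              · exact absurd hc (lt_irrefl i)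
              · exact absurd hc hinotmem
            refine hlinB_ct p₀ (lt_of_le_of_ne hip0le (Ne.symm hp0i)) (Or.inl ?_)
            rw [hmnsymm]
            simpa using hv
          · -- the pair was already forced to vanish
            have hpredL : predB L p₀ q₀ := by
              simp only [hpredB]
              rcases hpred with h | ⟨hmem, hlt⟩ | ⟨hmem, hlt⟩
              · exact Or.inl h
              · rcases Finset.mem_insert.1 hmem with h | h
                · exact absurd h hp0l
                · exact Or.inr (Or.inl ⟨h, hlt⟩)
              · rcases Finset.mem_insert.1 hmem with h | h
                · exact absurd h hq0l
                · exact Or.inr (Or.inr ⟨h, hlt⟩)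
            have hsub : {t : ℝ | rotG l i hli t * Q ∈ MB L} ⊆ (∅ : Set ℝ) := by
              intro t ht
              simp only [hMB, Set.mem_setOf_eq] at ht
              have := ht p₀ q₀ hpredL
              rw [hmcomp0 t p₀ q₀ hp0l hp0i hq0l hq0i] at this
              exact absurd this hv
            exact Set.Countable.mono hsub Set.countable_empty
  -- Phase B chain
  have chainB : ∀ (n : ℕ) (L : Finset (Fin m)), L ⊆ lows →
      lows.card ≤ L.card + n → μ (MB L) ≤ μ (MB lows) := by
    intro n
    induction n with
    | zero =>
      intro L hLsub hcard
      have : L = lows := Finset.eq_of_subset_of_card_le hLsub (by simpa using hcard)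
      rw [this]
    | succ n ih =>
      intro L hLsub hcard
      by_cases hL : L = lows
      · rw [hL]
      · obtain ⟨l, hllow, hlL⟩ := Finset.exists_of_ssubset (lt_of_le_of_ne hLsub hL)
        calc μ (MB L) ≤ μ (MB (insert l L)) := stepB L l hLsub hllow hlL
          _ ≤ μ (MB lows) := by
            apply ih (insert l L) (Finset.insert_subset hllow hLsub)
            rw [Finset.card_insert_of_notMem hlL]
            omega
  -- Final contradiction: on the generic event the full minor conditions are impossible
  have hfinal : MB lows ∩ G ⊆ (∅ : Set (OGT m)) := by
    rintro Q ⟨hQM, hQG⟩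
    simp only [hMB, Set.mem_setOf_eq] at hQM
    simp only [hG, Set.mem_setOf_eq] at hQG
    have hall : ∀ p : Fin m, mn Q p i1 = 0 := by
      intro p
      by_cases h : i ≤ p
      · exact hQM p i1 (Or.inl ⟨h, le_of_lt hlti1⟩)
      · refine hQM p i1 (Or.inr (Or.inl ⟨?_, hlti1⟩))
        simp [hlows]
        exact not_le.1 h
    have hxi1 : x Q i1 ≠ 0 := (hQG i1).1
    have hyp : ∀ p : Fin m, y Q p = (y Q i1 / x Q i1) * x Q p := by
      intro p
      have h := hall p
      simp only [hmn] at h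
      field_simp
      linear_combination -h
    have hr2 : (y Q i1 / x Q i1) ^ 2 = 1 := by
      have h1 : ∑ p, y Q p ^ 2 = 1 := hynorm Q
      rw [Finset.sum_congr rfl (fun p _ => by rw [hyp p, mul_pow])] at h1
      rw [← Finset.mul_sum, hxnorm Q, mul_one] at h1
      exact h1
    have hprod : (y Q i1 / x Q i1 - 1) * (y Q i1 / x Q i1 + 1) = 0 := by
      linear_combination hr2
    rcases mul_eq_zero.1 hprod with h | h
    · -- r = 1 : w₁ = w₂
      have hr1 : y Q i1 / x Q i1 = 1 := by linarith
      have : w₂ = w₁ := by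
        apply mulVec_inj Q
        funext p
        have hthis := hyp p
        rw [hr1, one_mul] at hthis
        exact hthis
      exact hne this.symm
    · have hr1 : y Q i1 / x Q i1 = -1 := by linarith
      have : w₂ = -w₁ := by
        apply mulVec_inj Q
        have hmv : (Q : Matrix (Fin m) (Fin m) ℝ).mulVec (-w₁)
            = -((Q : Matrix (Fin m) (Fin m) ℝ).mulVec w₁) := by
          rw [Matrix.mulVec_neg]
        rw [hmv]
        funext p
        have := hyp p
        rw [hr1] at this
        show y Q p = -(x Q p)
        linarith [this]
      apply hne'
      rw [this]
      funext p
      simp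
  -- Assemble everything
  have hglue1 : μ (CC tailLe) ≤ μ (MB ∅) := by
    calc μ (CC tailLe) ≤ μ ((CC tailLe ∩ G) ∪ Gᶜ) := by
          apply measure_mono
          intro Q hQ
          by_cases h : Q ∈ G
          · exact Or.inl ⟨hQ, h⟩
          · exact Or.inr h
      _ ≤ μ (CC tailLe ∩ G) + μ Gᶜ := measure_union_le _ _
      _ = μ (CC tailLe ∩ G) := by rw [hGc, add_zero]
      _ ≤ μ (MB ∅) := measure_mono hCtoM
  have hglue2 : μ (MB lows) = 0 := by
    have : μ (MB lows) ≤ μ (MB lows ∩ G) + μ Gᶜ := by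
      calc μ (MB lows) ≤ μ ((MB lows ∩ G) ∪ Gᶜ) := by
            apply measure_mono
            intro Q hQ
            by_cases h : Q ∈ G
            · exact Or.inl ⟨hQ, h⟩
            · exact Or.inr h
        _ ≤ μ (MB lows ∩ G) + μ Gᶜ := measure_union_le _ _
    have h0 : μ (MB lows ∩ G) = 0 :=
      le_antisymm (le_trans (measure_mono hfinal) (by simp)) (zero_le)
    rw [h0, hGc, add_zero] at this
    exact le_antisymm this (zero_le)
  have hii1mem : i ∈ ({i, i1} : Finset (Fin m)) := by simp
  have hi1mem : i1 ∈ ({i, i1} : Finset (Fin m)) := by simp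
  have hsub2 : ({i, i1} : Finset (Fin m)) ⊆ tailLe := by
    intro r hr
    rcases Finset.mem_insert.1 hr with h | h
    · subst h; exact hitail
    · rw [Finset.mem_singleton.1 h]; exact hi1tail
  have := calc μ E0 ≤ μ (CC {i, i1}) := step0
    _ ≤ μ (CC tailLe) := chainA tailLe.card {i, i1} hii1mem hi1mem hsub2 le_add_self
    _ ≤ μ (MB ∅) := hglue1
    _ ≤ μ (MB lows) := chainB lows.card ∅ (Finset.empty_subset lows) (by simp)
    _ = 0 := hglue2
  exact le_antisymm this (zero_le)



end PartTwo
end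

/-- Lemma 3.2 (coordinate form): if `w₁, …, w_K` are unit vectors in `ℝ^m` that are pairwise
neither equal nor antipodal, and `μ` is the Haar probability measure on the orthogonal group
`O(m)` (a left-translation-invariant probability measure), then for `μ`-almost every `Q`,
writing `ζ_a = Q·w_a`: (i) all coordinates of every `ζ_a` are nonzero, and (ii) for all
`a ≠ b` and every non-final coordinate `i`,
`(ζ_b)_i² · Σ_{j>i} (ζ_a)_j² ≠ (ζ_a)_i² · Σ_{j>i} (ζ_b)_j²`. -/
theorem generic_position_of_random_rotation
    (m : ℕ) (hm : 2 ≤ m) (K : ℕ) (hK : 1 ≤ K)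
    (w : Fin K → Fin m → ℝ)
    (hunit : ∀ a, Real.sqrt (∑ i, (w a i) ^ 2) = 1)
    (hpair : ∀ a b : Fin K, a ≠ b → w a ≠ w b ∧ w a ≠ -w b)
    (μ : Measure (Matrix.orthogonalGroup (Fin m) ℝ))
    [IsProbabilityMeasure μ]
    (hinv : ∀ Q : Matrix.orthogonalGroup (Fin m) ℝ,
      MeasurePreserving (fun R => Q * R) μ μ) :
    ∀ᵐ (Q : Matrix.orthogonalGroup (Fin m) ℝ) ∂μ,
      (∀ (a : Fin K) (i : Fin m), (Q : Matrix (Fin m) (Fin m) ℝ).mulVec (w a) i ≠ 0) ∧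
      (∀ a b : Fin K, a ≠ b → ∀ i : Fin m, (i : ℕ) + 1 < m →
        ((Q : Matrix (Fin m) (Fin m) ℝ).mulVec (w b) i) ^ 2 *
            ∑ j ∈ Finset.univ.filter (fun j : Fin m => i < j),
              ((Q : Matrix (Fin m) (Fin m) ℝ).mulVec (w a) j) ^ 2 ≠
          ((Q : Matrix (Fin m) (Fin m) ℝ).mulVec (w a) i) ^ 2 *
            ∑ j ∈ Finset.univ.filter (fun j : Fin m => i < j),
              ((Q : Matrix (Fin m) (Fin m) ℝ).mulVec (w b) j) ^ 2) := by
  have hsum : ∀ a, ∑ i, (w a i) ^ 2 = 1 := by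
    intro a
    have h := hunit a
    have hnn : 0 ≤ ∑ i, (w a i) ^ 2 := Finset.sum_nonneg fun i _ => sq_nonneg _
    nlinarith [Real.sq_sqrt hnn]
  have h1 : ∀ᵐ (Q : OGT m) ∂μ,
      ∀ (a : Fin K) (i : Fin m), (Q : Matrix (Fin m) (Fin m) ℝ).mulVec (w a) i ≠ 0 := by
    rw [MeasureTheory.ae_all_iff]
    intro a
    rw [MeasureTheory.ae_all_iff]
    intro i
    have h0 := zero_coord μ hinv (w a) (hsum a) i
    rw [MeasureTheory.ae_iff]
    convert h0 using 2
    ext Q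
    simp
  have h2 : ∀ᵐ (Q : OGT m) ∂μ,
      ∀ a b : Fin K, a ≠ b → ∀ i : Fin m, (i : ℕ) + 1 < m →
        ((Q : Matrix (Fin m) (Fin m) ℝ).mulVec (w b) i) ^ 2 *
            ∑ j ∈ Finset.univ.filter (fun j : Fin m => i < j),
              ((Q : Matrix (Fin m) (Fin m) ℝ).mulVec (w a) j) ^ 2 ≠
          ((Q : Matrix (Fin m) (Fin m) ℝ).mulVec (w a) i) ^ 2 *
            ∑ j ∈ Finset.univ.filter (fun j : Fin m => i < j),
              ((Q : Matrix (Fin m) (Fin m) ℝ).mulVec (w b) j) ^ 2 := by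
    rw [MeasureTheory.ae_all_iff]
    intro a
    rw [MeasureTheory.ae_all_iff]
    intro b
    by_cases hab : a = b
    · exact MeasureTheory.ae_of_all μ fun Q h => absurd hab h
    · have hba := hpair a b hab
      have hinner : ∀ᵐ (Q : OGT m) ∂μ, ∀ i : Fin m, (i : ℕ) + 1 < m →
          ((Q : Matrix (Fin m) (Fin m) ℝ).mulVec (w b) i) ^ 2 *
              ∑ j ∈ Finset.univ.filter (fun j : Fin m => i < j),
                ((Q : Matrix (Fin m) (Fin m) ℝ).mulVec (w a) j) ^ 2 ≠
            ((Q : Matrix (Fin m) (Fin m) ℝ).mulVec (w a) i) ^ 2 *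
              ∑ j ∈ Finset.univ.filter (fun j : Fin m => i < j),
                ((Q : Matrix (Fin m) (Fin m) ℝ).mulVec (w b) j) ^ 2 := by
        rw [MeasureTheory.ae_all_iff]
        intro i
        by_cases him : (i : ℕ) + 1 < m
        · have h0 := pair_nondeg μ hinv (w a) (w b) (hsum a) (hsum b) hba.1 hba.2 i him
          have : ∀ᵐ (Q : OGT m) ∂μ,
              ¬(((Q : Matrix (Fin m) (Fin m) ℝ).mulVec (w b) i) ^ 2 *
                  ∑ j ∈ Finset.univ.filter (fun j : Fin m => i < j),
                    ((Q : Matrix (Fin m) (Fin m) ℝ).mulVec (w a) j) ^ 2 =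
                ((Q : Matrix (Fin m) (Fin m) ℝ).mulVec (w a) i) ^ 2 *
                  ∑ j ∈ Finset.univ.filter (fun j : Fin m => i < j),
                    ((Q : Matrix (Fin m) (Fin m) ℝ).mulVec (w b) j) ^ 2) := by
            rw [MeasureTheory.ae_iff]
            convert h0 using 2
            ext Q
            simp
          exact this.mono fun Q h _ => h
        · exact MeasureTheory.ae_of_all μ fun Q h => absurd h him
      exact hinner.mono fun Q h _ => h
  exact h1.and h2
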